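/- Let r > 1 and for each fixed x let f(x,·) : (0,∞) → ℝ≥0 be such that s ↦ f(x,s)/s^{r-1} is strictly monotone decreasing. Define F(x,u) = ∫₀ᵘ f(x,s) ds for u ≥ 0. Then for each fixed x, the function t ↦ −F(x, t^{1/r}) : (0,∞) → ℝ is strictly convex. -/

import Mathlib

open Set MeasureTheory

theorem substituted_potential_strictly_convex
    (r : ℝ) (hr : 1 < r)
    (f : ℝ → ℝ)
    (hfnonneg : ∀ s ∈ Set.Ioi (0:ℝ), 0 ≤ f s)
    (hfcont : ContinuousOn f (Set.Ici 0))
    (hanti : StrictAntiOn (fun s => f s / s ^ (r - 1)) (Set.Ioi 0)) :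
    StrictConvexOn ℝ (Set.Ioi 0)
      (fun t : ℝ => -(∫ s in (0:ℝ)..(t ^ (1 / r)), f s)) := by
  have hr0 : (0:ℝ) < r := lt_trans one_pos hr
  have hir : (0:ℝ) < 1 / r := by positivity
  set G : ℝ → ℝ := fun t => -(∫ s in (0:ℝ)..(t ^ (1 / r)), f s) with hG
  -- derivative of G at t > 0
  have hderiv : ∀ t ∈ Set.Ioi (0:ℝ),
      HasDerivAt G (-(1 / r * (f (t ^ (1 / r)) / (t ^ (1 / r)) ^ (r - 1)))) t := by
    intro t ht
    have ht0 : (0:ℝ) < t := ht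
    have hu0 : (0:ℝ) < t ^ (1 / r) := Real.rpow_pos_of_pos ht0 _
    -- FTC part
    have hint : IntervalIntegrable f volume 0 (t ^ (1 / r)) := by
      apply ContinuousOn.intervalIntegrable
      apply hfcont.mono
      rw [Set.uIcc_of_le hu0.le]
      exact fun x hx => hx.1
    have hca : ContinuousAt f (t ^ (1 / r)) := by
      have : Set.Ici (0:ℝ) ∈ nhds (t ^ (1 / r)) :=
        Filter.mem_of_superset (Ioi_mem_nhds hu0) Ioi_subset_Ici_self
      exact hfcont.continuousAt this
    have hFTC : HasDerivAt (fun u => ∫ s in (0:ℝ)..u, f s) (f (t ^ (1 / r))) (t ^ (1 / r)) :=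
      intervalIntegral.integral_hasDerivAt_right hint
        (ContinuousOn.stronglyMeasurableAtFilter isOpen_Ioi
          (hfcont.mono Ioi_subset_Ici_self) _ hu0) hca
    have hrpow : HasDerivAt (fun t : ℝ => t ^ (1 / r)) (1 / r * t ^ (1 / r - 1)) t :=
      Real.hasDerivAt_rpow_const (Or.inl ht0.ne')
    have hcomp := (hFTC.comp t hrpow).neg
    convert hcomp using 1
    case e'_4 => rfl
    case e'_5 => rfl
    case e'_8 => rfl
    have key : t ^ (1 / r - 1) = ((t ^ (1 / r)) ^ (r - 1))⁻¹ := by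
      rw [← Real.rpow_mul ht0.le, ← Real.rpow_neg ht0.le]
      congr 1
      field_simp
      ring
    rw [key]
    field_simp
  have hmono : StrictMonoOn (deriv G) (interior (Set.Ioi (0:ℝ))) := by
    rw [interior_Ioi]
    intro a ha b hb hab
    rw [(hderiv a ha).deriv, (hderiv b hb).deriv]
    have hu : a ^ (1 / r) < b ^ (1 / r) :=
      Real.rpow_lt_rpow (le_of_lt ha) hab hir
    have hua : (0:ℝ) < a ^ (1 / r) := Real.rpow_pos_of_pos ha _
    have h := hanti hua (Set.mem_Ioi.mpr (lt_trans hua hu)) hu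
    simp only at h
    have := mul_lt_mul_of_pos_left h hir
    linarith
  have hcont : ContinuousOn G (Set.Ioi 0) := fun t ht =>
    ((hderiv t ht).continuousAt).continuousWithinAt
  exact StrictMonoOn.strictConvexOn_of_deriv (convex_Ioi 0) hcont hmono
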